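/- arXiv:math-ph/0008011 — 7 statements merged into one kernel-verified Lean document; each statement's English description precedes it below -/
import Mathlib

section
/- Let ε : ℝ → ℝ be continuously differentiable on [0,∞) with ε(t) > 0 for all t ≥ 0, ε monotonically decreasing with ε(t) → 0 as t → ∞, and |ε'(t)|/ε(t)^{5/2} → 0 as t → ∞. Then ∫₀^∞ ε(t) dt = ∞ (i.e., ∫₀^T ε(t) dt → ∞ as T → ∞). -/
open Filter Set

/-- Under conditions (1.4) on `ε`, the integral `∫₀^∞ ε(t) dt` diverges, i.e.
`∫₀^T ε(t) dt → ∞` as `T → ∞`. -/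
theorem stmt3 (ε ε' : ℝ → ℝ)
    (hεC1 : ContDiffOn ℝ 1 ε (Ici 0))
    (hεd : ∀ t ∈ Ici (0 : ℝ), HasDerivWithinAt ε (ε' t) (Ici 0) t)
    (hεpos : ∀ t ∈ Ici (0 : ℝ), 0 < ε t)
    (hεdec : AntitoneOn ε (Ici 0))
    (hεlim : Tendsto ε atTop (nhds 0))
    (hεrate : Tendsto (fun t => |ε' t| / (ε t ^ ((5 : ℝ) / 2))) atTop (nhds 0)) :
    Tendsto (fun T => ∫ t in (0 : ℝ)..T, ε t) atTop atTop := by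
  -- choose t0 past which |ε'|/ε^{5/2} ≤ 2/3
  obtain ⟨a, ha⟩ := (eventually_atTop).1
    (hεrate.eventually (gt_mem_nhds (by norm_num : (0:ℝ) < 2/3)))
  set t0 : ℝ := max a 1 with ht0def
  have ht0one : (1:ℝ) ≤ t0 := le_max_right _ _
  have ht0pos : (0:ℝ) < t0 := lt_of_lt_of_le one_pos ht0one
  have ht0mem : t0 ∈ Ici (0:ℝ) := le_of_lt ht0pos
  have hsub : Ici t0 ⊆ Ici (0:ℝ) := Ici_subset_Ici.2 ht0pos.le
  have hrate : ∀ t, t0 ≤ t → |ε' t| / ε t ^ ((5:ℝ)/2) ≤ 2/3 :=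
    fun t ht => (ha t (le_trans (le_max_left _ _) ht)).le
  -- g = ε ^ (-3/2)
  set g : ℝ → ℝ := fun t => ε t ^ (-(3:ℝ)/2) with hg
  have hgpos : ∀ t ∈ Ici (0:ℝ), 0 < g t := fun t ht =>
    Real.rpow_pos_of_pos (hεpos t ht) _
  -- F = t - g t is monotone on Ici t0
  have hmono : MonotoneOn (fun t => t - g t) (Ici t0) := by
    apply monotoneOn_of_hasDerivWithinAt_nonneg (convex_Ici t0)
      (f' := fun x => 1 - (-(3:ℝ)/2) * ε x ^ (-(3:ℝ)/2 - 1) * ε' x)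
    · exact continuousOn_id.sub
        (((hεC1.continuousOn).mono hsub).rpow_const
          (fun x hx => Or.inl (hεpos x (hsub hx)).ne'))
    · intro x hx
      rw [interior_Ici] at hx
      have hx0 : (0:ℝ) < x := lt_of_le_of_lt ht0pos.le hx
      have hεx : HasDerivAt ε (ε' x) x :=
        (hεd x hx0.le).hasDerivAt (Ici_mem_nhds hx0)
      have hgx : HasDerivAt g ((-(3:ℝ)/2) * ε x ^ (-(3:ℝ)/2 - 1) * ε' x) x := by
        have := hεx.rpow_const (p := -(3:ℝ)/2) (Or.inl (hεpos x hx0.le).ne')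
        convert this using 1
        ring
      exact ((hasDerivAt_id x).sub hgx).hasDerivWithinAt
    · intro x hx
      rw [interior_Ici] at hx
      have hx0 : (0:ℝ) < x := lt_of_le_of_lt ht0pos.le hx
      have hεxpos : 0 < ε x := hεpos x hx0.le
      have h52 : ε x ^ (-(3:ℝ)/2 - 1) = (ε x ^ ((5:ℝ)/2))⁻¹ := by
        rw [show -(3:ℝ)/2 - 1 = -(5/2) by norm_num, Real.rpow_neg hεxpos.le]
      have hkey : (-(3:ℝ)/2) * ε x ^ (-(3:ℝ)/2 - 1) * ε' x ≤ 1 := by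
        calc (-(3:ℝ)/2) * ε x ^ (-(3:ℝ)/2 - 1) * ε' x
            ≤ |(-(3:ℝ)/2) * ε x ^ (-(3:ℝ)/2 - 1) * ε' x| := le_abs_self _
          _ = (3/2) * (|ε' x| / ε x ^ ((5:ℝ)/2)) := by
              rw [abs_mul, abs_mul, h52, abs_of_nonneg
                (inv_nonneg.2 (Real.rpow_nonneg hεxpos.le _)),
                show |(-(3:ℝ)/2)| = 3/2 from by norm_num, div_eq_mul_inv]
              ring
          _ ≤ (3/2) * (2/3) := by
              have := hrate x hx.le
              nlinarith [this]
          _ = 1 := by norm_num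
      linarith
  -- hence g t ≤ g t0 + (t - t0) and ε t ≥ (g t0 + (t - t0))^{-2/3}
  have hlow : ∀ t, t0 ≤ t → (t + (g t0 - t0)) ^ (-(2:ℝ)/3) ≤ ε t := by
    intro t ht
    have h1 : t0 - g t0 ≤ t - g t := hmono self_mem_Ici ht ht
    have hgt : g t ≤ t + (g t0 - t0) := by linarith
    have hgtpos : 0 < g t := hgpos t (hsub ht)
    have h2 : (t + (g t0 - t0)) ^ (-(2:ℝ)/3) ≤ (g t) ^ (-(2:ℝ)/3) :=
      Real.rpow_le_rpow_of_nonpos hgtpos hgt (by norm_num)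
    have h3 : (g t) ^ (-(2:ℝ)/3) = ε t := by
      have hgt' : g t = ε t ^ (-(3:ℝ)/2) := rfl
      rw [hgt', ← Real.rpow_mul (hεpos t (hsub ht)).le,
        show (-(3:ℝ)/2) * (-(2:ℝ)/3) = 1 from by norm_num, Real.rpow_one]
    linarith
  set c : ℝ := g t0 - t0 with hc
  have hcpos : 0 < t0 + c := by
    have := hgpos t0 ht0mem
    simp [hc]; linarith
  -- the comparison integral and its divergence
  have hcomp : ∀ T, t0 ≤ T →
      (∫ t in t0..T, (t + c) ^ (-(2:ℝ)/3)) =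
        ((T + c) ^ ((1:ℝ)/3) - (t0 + c) ^ ((1:ℝ)/3)) / (1/3) := by
    intro T hT
    rw [intervalIntegral.integral_comp_add_right (fun u => u ^ (-(2:ℝ)/3)) c]
    rw [integral_rpow (Or.inl (by norm_num))]
    norm_num
  -- ε is interval integrable on subintervals of [0,∞)
  have hint : ∀ b₁ b₂ : ℝ, 0 ≤ b₁ → b₁ ≤ b₂ →
      IntervalIntegrable ε MeasureTheory.volume b₁ b₂ := by
    intro b₁ b₂ h1 h2
    apply ContinuousOn.intervalIntegrable
    apply (hεC1.continuousOn).mono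
    rw [uIcc_of_le h2]
    exact fun x hx => le_trans h1 hx.1
  have hintc : ∀ T, t0 ≤ T →
      IntervalIntegrable (fun t => (t + c) ^ (-(2:ℝ)/3)) MeasureTheory.volume t0 T := by
    intro T hT
    apply ContinuousOn.intervalIntegrable
    apply ContinuousOn.rpow_const (by fun_prop)
    intro x hx
    rw [uIcc_of_le hT] at hx
    left
    have : t0 + c ≤ x + c := by linarith [hx.1]
    linarith
  -- divergence of the lower bound
  have hdiv : Tendsto (fun T => ((T + c) ^ ((1:ℝ)/3) - (t0 + c) ^ ((1:ℝ)/3)) / (1/3))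
      atTop atTop := by
    apply Tendsto.atTop_div_const (by norm_num)
    apply tendsto_atTop_add_const_right
    exact (tendsto_rpow_atTop (by norm_num)).comp (tendsto_atTop_add_const_right _ c tendsto_id)
  -- conclude by comparison
  apply tendsto_atTop_mono' atTop _ hdiv
  filter_upwards [eventually_ge_atTop t0] with T hT
  have hsplit : (∫ t in (0:ℝ)..T, ε t) =
      (∫ t in (0:ℝ)..t0, ε t) + ∫ t in t0..T, ε t :=
    (intervalIntegral.integral_add_adjacent_intervals
      (hint 0 t0 le_rfl ht0pos.le) (hint t0 T ht0pos.le hT)).symm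
  have h1 : 0 ≤ ∫ t in (0:ℝ)..t0, ε t :=
    intervalIntegral.integral_nonneg ht0pos.le
      (fun u hu => (hεpos u hu.1).le)
  have h2 : (∫ t in t0..T, (t + c) ^ (-(2:ℝ)/3)) ≤ ∫ t in t0..T, ε t := by
    apply intervalIntegral.integral_mono_on hT (hintc T hT)
      (hint t0 T ht0pos.le hT)
    exact fun u hu => hlow u hu.1
  rw [← hcomp T hT, hsplit]
  linarith
end

section
/- Let H be a complex Hilbert space and B : H →L[ℂ] H a self-adjoint, nonnegative, injective bounded operator. Then for every y ∈ H, ‖(B + ε•I)^{-1} (B y) − y‖ → 0 as ε → 0⁺. -/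
open ContinuousLinearMap Filter Set

/-- For `B` self-adjoint, nonnegative and injective, the Tikhonov-regularized
solution `(B + εI)⁻¹ B y` converges in norm to `y` as `ε → 0⁺`. -/
theorem stmt10 {H : Type*} [NormedAddCommGroup H] [InnerProductSpace ℂ H] [CompleteSpace H]
    (B : H →L[ℂ] H) (hB : IsSelfAdjoint B)
    (hBnn : ∀ x : H, 0 ≤ (inner ℂ (B x) x : ℂ).re)
    (hBinj : Function.Injective B) (y : H) :
    Tendsto (fun ε : ℝ => ‖Ring.inverse (B + ε • (1 : H →L[ℂ] H)) (B y) - y‖)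
      (nhdsWithin 0 (Ioi 0)) (nhds 0) := by
  have hsymm : ∀ x u : H, (inner ℂ (B x) u : ℂ) = inner ℂ x (B u) :=
    isSelfAdjoint_iff_isSymmetric.mp hB
  set A : ℝ → (H →L[ℂ] H) := fun ε => B + ε • (1 : H →L[ℂ] H) with hAdef
  have happ : ∀ (ε : ℝ) (z : H), A ε z = B z + (ε : ℂ) • z := by
    intro ε z
    show (B + ε • (1 : H →L[ℂ] H)) z = _
    rw [add_apply, smul_apply, ContinuousLinearMap.one_apply, RCLike.real_smul_eq_coe_smul (K := ℂ)]
    rfl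
  -- coercivity
  have hre : ∀ (ε : ℝ) (z : H), ε * ‖z‖ ^ 2 ≤ (inner ℂ (A ε z) z : ℂ).re := by
    intro ε z
    rw [happ, inner_add_left, inner_smul_left, Complex.conj_ofReal, Complex.add_re,
      Complex.mul_re, Complex.ofReal_re, Complex.ofReal_im]
    have h2 : (inner ℂ z z : ℂ).re = ‖z‖ ^ 2 := inner_self_eq_norm_sq (𝕜 := ℂ) z
    have h3 : (inner ℂ z z : ℂ).im = 0 := inner_self_im (𝕜 := ℂ) z
    rw [h2, h3]
    linarith [hBnn z]
  have hlow : ∀ (ε : ℝ), 0 < ε → ∀ z : H, ε * ‖z‖ ≤ ‖A ε z‖ := by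
    intro ε hε z
    rcases eq_or_ne z 0 with rfl | hz
    · simp
    · have h2 : ε * ‖z‖ ^ 2 ≤ ‖A ε z‖ * ‖z‖ := by
        refine (hre ε z).trans <| (Complex.re_le_norm _).trans ?_
        exact norm_inner_le_norm _ _
      have hz' : 0 < ‖z‖ := norm_pos_iff.mpr hz
      rw [pow_two, ← mul_assoc] at h2
      exact le_of_mul_le_mul_right h2 hz'
  have hunit : ∀ (ε : ℝ), 0 < ε → IsUnit (A ε) := by
    intro ε hε
    refine isUnit_of_forall_le_norm_inner_map (A ε) (c := ⟨ε, hε.le⟩) (by exact_mod_cast hε)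
      fun x => ?_
    calc ‖x‖ ^ 2 * (⟨ε, hε.le⟩ : NNReal) = ε * ‖x‖ ^ 2 := by
          simp [mul_comm]
      _ ≤ (inner ℂ (A ε x) x : ℂ).re := hre ε x
      _ ≤ ‖(inner ℂ (A ε x) x : ℂ)‖ := by
          exact Complex.re_le_norm _
  -- inverse facts
  have hAC : ∀ (ε : ℝ), 0 < ε → ∀ v : H, A ε (Ring.inverse (A ε) v) = v := by
    intro ε hε v
    have := congrArg (fun T : H →L[ℂ] H => T v) (Ring.mul_inverse_cancel _ (hunit ε hε))
    simpa [mul_apply] using this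
  have hCA : ∀ (ε : ℝ), 0 < ε → ∀ v : H, Ring.inverse (A ε) (A ε v) = v := by
    intro ε hε v
    have := congrArg (fun T : H →L[ℂ] H => T v) (Ring.inverse_mul_cancel _ (hunit ε hε))
    simpa [mul_apply] using this
  have hCbound : ∀ (ε : ℝ), 0 < ε → ∀ v : H, ε * ‖Ring.inverse (A ε) v‖ ≤ ‖v‖ := by
    intro ε hε v
    have := hlow ε hε (Ring.inverse (A ε) v)
    rwa [hAC ε hε v] at this
  have hkey : ∀ (ε : ℝ), 0 < ε → ∀ v : H,
      Ring.inverse (A ε) (B v) = v - (ε : ℂ) • Ring.inverse (A ε) v := by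
    intro ε hε v
    have h1 : Ring.inverse (A ε) (B v + (ε : ℂ) • v) = v := by
      rw [← happ ε v]; exact hCA ε hε v
    rw [map_add, map_smul] at h1
    exact eq_sub_of_add_eq h1
  -- density of the range of B
  have hdense : ∀ η : ℝ, 0 < η → ∃ x : H, ‖y - B x‖ < η := by
    intro η hη
    have horth : (LinearMap.range (B : H →ₗ[ℂ] H))ᗮ = ⊥ := by
      rw [Submodule.eq_bot_iff]
      intro u hu
      have hBu : B u = 0 := by
        have h2 : (inner ℂ (B (B u)) u : ℂ) = 0 :=
          (Submodule.mem_orthogonal _ u).mp hu _ (LinearMap.mem_range_self _ (B u))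
        rw [hsymm (B u) u] at h2
        exact inner_self_eq_zero.mp h2
      have := hBinj (hBu.trans (map_zero B).symm)
      exact this
    have hclos : (LinearMap.range (B : H →ₗ[ℂ] H)).topologicalClosure = ⊤ :=
      Submodule.topologicalClosure_eq_top_iff.mpr horth
    have hy : y ∈ closure ((LinearMap.range (B : H →ₗ[ℂ] H) : Submodule ℂ H) : Set H) := by
      have : y ∈ (LinearMap.range (B : H →ₗ[ℂ] H)).topologicalClosure := hclos ▸ Submodule.mem_top
      exact this
    rw [Metric.mem_closure_iff] at hy
    obtain ⟨b, hb, hby⟩ := hy η hη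
    obtain ⟨x, rfl⟩ := hb
    exact ⟨x, by rwa [← dist_eq_norm]⟩
  -- main estimate
  rw [Metric.tendsto_nhdsWithin_nhds]
  intro η hη
  obtain ⟨x, hx⟩ := hdense (η / 2) (by linarith)
  refine ⟨η / (4 * (‖x‖ + 1)), by positivity, ?_⟩
  intro ε hεmem hεd
  have hε : 0 < ε := hεmem
  rw [Real.dist_eq, sub_zero, abs_of_pos hε] at hεd
  have hval : Ring.inverse (A ε) (B y) - y = -((ε : ℂ) • Ring.inverse (A ε) y) := by
    rw [hkey ε hε y]; abel
  have hnorm : ‖Ring.inverse (A ε) (B y) - y‖ = ε * ‖Ring.inverse (A ε) y‖ := by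
    rw [hval, norm_neg, norm_smul, Complex.norm_real, Real.norm_eq_abs, abs_of_pos hε]
  have hbound : ε * ‖Ring.inverse (A ε) y‖ ≤ ‖y - B x‖ + 2 * (ε * ‖x‖) := by
    have hsplit : Ring.inverse (A ε) y
        = Ring.inverse (A ε) (y - B x) + Ring.inverse (A ε) (B x) := by
      rw [← map_add]; congr 1; abel
    have h1 := hCbound ε hε (y - B x)
    have h2 : ε * ‖Ring.inverse (A ε) (B x)‖ ≤ 2 * (ε * ‖x‖) := by
      rw [hkey ε hε x]
      have h3 : ‖x - (ε : ℂ) • Ring.inverse (A ε) x‖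
          ≤ ‖x‖ + ε * ‖Ring.inverse (A ε) x‖ := by
        refine (norm_sub_le _ _).trans ?_
        rw [norm_smul, Complex.norm_real, Real.norm_eq_abs, abs_of_pos hε]
      have h4 := hCbound ε hε x
      calc ε * ‖x - (ε : ℂ) • Ring.inverse (A ε) x‖
          ≤ ε * (‖x‖ + ε * ‖Ring.inverse (A ε) x‖) := by
            exact mul_le_mul_of_nonneg_left h3 hε.le
        _ ≤ 2 * (ε * ‖x‖) := by nlinarith
    calc ε * ‖Ring.inverse (A ε) y‖
        ≤ ε * (‖Ring.inverse (A ε) (y - B x)‖ + ‖Ring.inverse (A ε) (B x)‖) := by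
          rw [hsplit]; exact mul_le_mul_of_nonneg_left (norm_add_le _ _) hε.le
      _ = ε * ‖Ring.inverse (A ε) (y - B x)‖ + ε * ‖Ring.inverse (A ε) (B x)‖ := by ring
      _ ≤ ‖y - B x‖ + 2 * (ε * ‖x‖) := add_le_add h1 h2
  have hx1 : (0:ℝ) < ‖x‖ + 1 := by positivity
  have h2εx : 2 * (ε * ‖x‖) ≤ η / 2 := by
    have : ε * (‖x‖ + 1) ≤ η / 4 := by
      have := mul_le_mul_of_nonneg_right hεd.le hx1.le
      rw [div_mul_eq_mul_div, mul_comm (4:ℝ), ← div_div] at this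
      calc ε * (‖x‖ + 1) ≤ η / (4 * (‖x‖ + 1)) * (‖x‖ + 1) := by
            exact mul_le_mul_of_nonneg_right hεd.le hx1.le
        _ = η / 4 := by field_simp
    nlinarith [hε.le, norm_nonneg x]
  rw [Real.dist_eq, sub_zero]
  have hnn : (0:ℝ) ≤ ‖Ring.inverse (A ε) (B y) - y‖ := norm_nonneg _
  rw [abs_of_nonneg hnn]
  calc ‖Ring.inverse (A ε) (B y) - y‖ = ε * ‖Ring.inverse (A ε) y‖ := hnorm
    _ ≤ ‖y - B x‖ + 2 * (ε * ‖x‖) := hbound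
    _ < η / 2 + η / 2 := by
        have := h2εx
        exact add_lt_add_of_lt_of_le hx this
    _ = η := by ring
end

section
/- Let H be a complex Hilbert space and B : H → H a (not necessarily linear) map that is monotone, i.e. re⟪B u − B v, u − v⟫ ≥ 0 for all u, v ∈ H, and hemicontinuous, i.e. for every x, p ∈ H the map t ↦ B(x + t • p) from ℝ to H is continuous at t = 0 with respect to the weak topology on H. If a sequence (xₙ) converges weakly to x ∈ H and (B xₙ) converges in norm to f ∈ H, then B x = f. -/
open Filter

/-- Minty-type claim: a monotone, hemicontinuous (possibly nonlinear) map
`B : H → H` is weakly closed: if `xₙ ⇀ x` weakly and `B xₙ → f` in norm, then `B x = f`.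
Hemicontinuity means that for each `x, p`, the map `t ↦ B(x + t p)` is weakly continuous
at `t = 0`, i.e. all inner ℂ products converge. Weak convergence of `xₙ` to `x` means
`⟪z, xₙ⟫ → ⟪z, x⟫` for all `z`. -/
theorem stmt14 {H : Type*} [NormedAddCommGroup H] [InnerProductSpace ℂ H] [CompleteSpace H]
    (B : H → H)
    (hmono : ∀ u v : H, 0 ≤ (inner ℂ (B u - B v) (u - v) : ℂ).re)
    (hhemi : ∀ x p z : H,
      Tendsto (fun t : ℝ => (inner ℂ z (B (x + t • p)) : ℂ)) (nhds 0) (nhds (inner ℂ z (B x))))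
    (x : H) (xseq : ℕ → H) (f : H)
    (hweak : ∀ z : H, Tendsto (fun n => (inner ℂ z (xseq n) : ℂ)) atTop (nhds (inner ℂ z x)))
    (hnorm : Tendsto (fun n => B (xseq n)) atTop (nhds f)) :
    B x = f := by
  -- Step 0: the weakly convergent sequence is bounded (Banach–Steinhaus).
  obtain ⟨M, hM⟩ : ∃ M : ℝ, ∀ n, ‖xseq n‖ ≤ M := by
    have hpt : ∀ z : H, ∃ C : ℝ, ∀ n,
        ‖(InnerProductSpace.toDual ℂ H (xseq n)) z‖ ≤ C := by
      intro z
      have h1 : Tendsto (fun n => ‖(inner ℂ z (xseq n) : ℂ)‖) atTop (nhds ‖(inner ℂ z x : ℂ)‖) :=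
        (hweak z).norm
      obtain ⟨C, hC⟩ := h1.bddAbove_range
      refine ⟨C, fun n => ?_⟩
      have : ‖(InnerProductSpace.toDual ℂ H (xseq n)) z‖ = ‖(inner ℂ z (xseq n) : ℂ)‖ := by
        rw [InnerProductSpace.toDual_apply_apply, norm_inner_symm]
      rw [this]
      exact hC ⟨n, rfl⟩
    obtain ⟨C', hC'⟩ := banach_steinhaus hpt
    refine ⟨C', fun n => ?_⟩
    have := hC' n
    rwa [(InnerProductSpace.toDual ℂ H).norm_map] at this
  -- Step 1: for every `v`, `0 ≤ re ⟪f - B v, x - v⟫`.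
  have hkey : ∀ v : H, 0 ≤ (inner ℂ (f - B v) (x - v) : ℂ).re := by
    intro v
    have htend : Tendsto (fun n => (inner ℂ (B (xseq n) - B v) (xseq n - v) : ℂ)) atTop
        (nhds (inner ℂ (f - B v) (x - v) : ℂ)) := by
      have heq : ∀ n, (inner ℂ (B (xseq n) - B v) (xseq n - v) : ℂ)
          = inner ℂ (B (xseq n) - f) (xseq n - v) + inner ℂ (f - B v) (xseq n - v) := by
        intro n
        rw [← inner_add_left]
        congr 1
        abel
      have h1 : Tendsto (fun n => (inner ℂ (B (xseq n) - f) (xseq n - v) : ℂ)) atTop (nhds 0) := by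
        rw [tendsto_zero_iff_norm_tendsto_zero]
        have hb : Tendsto (fun n => ‖B (xseq n) - f‖ * (M + ‖v‖)) atTop (nhds 0) := by
          have := (tendsto_iff_norm_sub_tendsto_zero.mp hnorm).mul_const (M + ‖v‖)
          simpa using this
        refine squeeze_zero (fun n => norm_nonneg _) (fun n => ?_) hb
        calc ‖(inner ℂ (B (xseq n) - f) (xseq n - v) : ℂ)‖
            ≤ ‖B (xseq n) - f‖ * ‖xseq n - v‖ := norm_inner_le_norm _ _
          _ ≤ ‖B (xseq n) - f‖ * (M + ‖v‖) := by
              gcongr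
              calc ‖xseq n - v‖ ≤ ‖xseq n‖ + ‖v‖ := norm_sub_le _ _
                _ ≤ M + ‖v‖ := by gcongr; exact hM n
      have h2 : Tendsto (fun n => (inner ℂ (f - B v) (xseq n - v) : ℂ)) atTop
          (nhds (inner ℂ (f - B v) (x - v) : ℂ)) := by
        simp only [inner_sub_right]
        exact (hweak (f - B v)).sub tendsto_const_nhds
      have := h1.add h2
      simp only [zero_add] at this
      exact this.congr fun n => (heq n).symm
    have hre : Tendsto (fun n => (inner ℂ (B (xseq n) - B v) (xseq n - v) : ℂ).re) atTop
        (nhds (inner ℂ (f - B v) (x - v) : ℂ).re) :=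
      (Complex.continuous_re.tendsto _).comp htend
    exact ge_of_tendsto' hre fun n => hmono _ _
  -- Step 2: for every `p`, `0 ≤ re ⟪f - B x, p⟫`.
  have hkey2 : ∀ p : H, 0 ≤ (inner ℂ (f - B x) p : ℂ).re := by
    intro p
    have htend : Tendsto (fun t : ℝ => ((inner ℂ p f : ℂ) - inner ℂ p (B (x + t • (-p)))).re)
        (nhds 0) (nhds ((inner ℂ p f : ℂ) - inner ℂ p (B x)).re) :=
      (Complex.continuous_re.tendsto _).comp (tendsto_const_nhds.sub (hhemi x (-p) p))
    have htend' : Tendsto (fun t : ℝ => ((inner ℂ p f : ℂ) - inner ℂ p (B (x + t • (-p)))).re)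
        (nhdsWithin 0 (Set.Ioi 0)) (nhds ((inner ℂ p f : ℂ) - inner ℂ p (B x)).re) :=
      htend.mono_left nhdsWithin_le_nhds
    have hpos : ∀ t ∈ Set.Ioi (0 : ℝ),
        0 ≤ ((inner ℂ p f : ℂ) - inner ℂ p (B (x + t • (-p)))).re := by
      intro t ht
      have h := hkey (x - t • p)
      have hx : x - (x - t • p) = t • p := by abel
      rw [hx] at h
      have hsm : (inner ℂ (f - B (x - t • p)) (t • p) : ℂ)
          = (t : ℂ) * inner ℂ (f - B (x - t • p)) p := by
        rw [← Complex.coe_smul, inner_smul_right]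
      rw [hsm] at h
      have hre : ((t : ℂ) * (inner ℂ (f - B (x - t • p)) p : ℂ)).re
          = t * (inner ℂ (f - B (x - t • p)) p : ℂ).re := by
        simp
      rw [hre] at h
      have h' : 0 ≤ (inner ℂ (f - B (x - t • p)) p : ℂ).re :=
        nonneg_of_mul_nonneg_right h ht
      have hxs : x + t • (-p) = x - t • p := by
        rw [smul_neg]; abel
      rw [hxs]
      have : ((inner ℂ p f : ℂ) - inner ℂ p (B (x - t • p))).re
          = ((inner ℂ p (f - B (x - t • p)) : ℂ)).re := by
        rw [inner_sub_right]
      rw [this, ← inner_conj_symm, Complex.conj_re]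
      exact h'
    have := ge_of_tendsto htend' (eventually_nhdsWithin_of_forall hpos)
    have hrw : ((inner ℂ p f : ℂ) - inner ℂ p (B x)).re = (inner ℂ (f - B x) p : ℂ).re := by
      rw [← inner_sub_right, ← inner_conj_symm, Complex.conj_re]
    linarith [hrw ▸ this]
  -- Conclusion: take `p = B x - f`.
  have h := hkey2 (B x - f)
  have heq : (B x - f) = -(f - B x) := by abel
  rw [heq, inner_neg_right, Complex.neg_re] at h
  have hsq : (inner ℂ (f - B x) (f - B x) : ℂ).re = ‖f - B x‖ ^ 2 := by
    rw [← RCLike.re_to_complex]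
    exact inner_self_eq_norm_sq (f - B x)
  have hn : ‖f - B x‖ = 0 := by
    have h0 : ‖f - B x‖ ^ 2 ≤ 0 := by rw [← hsq]; linarith
    nlinarith [norm_nonneg (f - B x)]
  have hz : f - B x = 0 := norm_eq_zero.mp hn
  rw [sub_eq_zero] at hz
  exact hz.symm
end

section
/- Let H be a complex Hilbert space, A : H →L[ℂ] H a bounded linear operator, y ∈ H, f := A y, B := A†A, and let δ > 0, ε > 0, and f_δ ∈ H with ‖f_δ − f‖ ≤ δ. Then ‖(B + ε•I)^{-1}(A† f_δ) − y‖ ≤ ‖(B + ε•I)^{-1}(B y) − y‖ + δ/(2√ε). -/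
open ContinuousLinearMap

section aux
variable {H : Type*} [NormedAddCommGroup H] [InnerProductSpace ℂ H] [CompleteSpace H]

local notation "⟪" x ", " y "⟫" => @inner ℂ _ _ x y

lemma key_bound (A : H →L[ℂ] H) (ε : ℝ) (hε : 0 < ε)
    (hu : IsUnit ((adjoint A * A) + ε • (1 : H →L[ℂ] H))) (g : H) :
    ‖Ring.inverse ((adjoint A * A) + ε • (1 : H →L[ℂ] H)) (adjoint A g)‖
      ≤ ‖g‖ / (2 * Real.sqrt ε) := by
  set T := (adjoint A * A) + ε • (1 : H →L[ℂ] H) with hT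
  set x := Ring.inverse T (adjoint A g) with hx
  have hTx : T x = adjoint A g := by
    have := Ring.mul_inverse_cancel T hu
    calc T x = (T * Ring.inverse T) (adjoint A g) := rfl
    _ = adjoint A g := by rw [this]; simp
  have hre : ‖A x‖^2 + ε * ‖x‖^2 = RCLike.re ⟪T x, x⟫ := by
    rw [hT]
    have h2 : RCLike.re (⟪(ε • x : H), x⟫) = ε * ‖x‖^2 := by
      rw [RCLike.real_smul_eq_coe_smul (K := ℂ), inner_smul_left, RCLike.conj_ofReal]
      simp [RCLike.mul_re, inner_self_eq_norm_sq, inner_self_im, mul_comm, ← Complex.ofReal_pow]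
    simp only [add_apply, smul_apply, one_apply_eq_self, mul_apply_eq_comp, inner_add_left,
      adjoint_inner_left, map_add, inner_self_eq_norm_sq]
    linarith [h2]
  have hrhs : RCLike.re ⟪T x, x⟫ ≤ ‖g‖ * ‖A x‖ := by
    rw [hTx, adjoint_inner_left]
    exact re_inner_le_norm g (A x)
  have hineq : ε * ‖x‖^2 ≤ ‖g‖^2 / 4 := by nlinarith [sq_nonneg (‖A x‖ - ‖g‖/2)]
  set r := Real.sqrt ε with hr
  have hrpos : 0 < r := Real.sqrt_pos.mpr hε
  have hr2 : r^2 = ε := Real.sq_sqrt hε.le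
  have hsq : ‖x‖^2 ≤ (‖g‖ / (2*r))^2 := by
    rw [div_pow, le_div_iff₀ (by positivity)]
    nlinarith
  calc ‖x‖ = Real.sqrt (‖x‖^2) := (Real.sqrt_sq (norm_nonneg _)).symm
  _ ≤ Real.sqrt ((‖g‖ / (2*r))^2) := Real.sqrt_le_sqrt hsq
  _ = ‖g‖ / (2*r) := Real.sqrt_sq (by positivity)

end aux

/-- error splitting for Tikhonov regularization with noisy data:
`‖(B + εI)⁻¹ A† f_δ − y‖ ≤ ‖(B + εI)⁻¹ B y − y‖ + δ/(2√ε)` when `‖f_δ − A y‖ ≤ δ`. -/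
theorem stmt15 {H : Type*} [NormedAddCommGroup H] [InnerProductSpace ℂ H] [CompleteSpace H]
    (A : H →L[ℂ] H) (y : H) (f : H) (hf : f = A y)
    (B : H →L[ℂ] H) (hB : B = adjoint A * A)
    (δ ε : ℝ) (hδ : 0 < δ) (hε : 0 < ε)
    (fδ : H) (hfδ : ‖fδ - f‖ ≤ δ) :
    ‖Ring.inverse (B + ε • (1 : H →L[ℂ] H)) (adjoint A fδ) - y‖ ≤
      ‖Ring.inverse (B + ε • (1 : H →L[ℂ] H)) (B y) - y‖ + δ / (2 * Real.sqrt ε) := by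
  have hden : 0 < 2 * Real.sqrt ε := by positivity
  by_cases hu : IsUnit (B + ε • (1 : H →L[ℂ] H))
  · set S := Ring.inverse (B + ε • (1 : H →L[ℂ] H)) with hS
    have hsplit : adjoint A fδ = B y + adjoint A (fδ - f) := by
      rw [map_sub, hf, hB]
      simp [mul_apply]
    have h1 : S (adjoint A fδ) - y = (S (B y) - y) + S (adjoint A (fδ - f)) := by
      rw [hsplit, map_add]; abel
    rw [h1]
    have h2 : ‖S (adjoint A (fδ - f))‖ ≤ ‖fδ - f‖ / (2 * Real.sqrt ε) := by
      rw [hS, hB] at *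
      exact key_bound A ε hε hu (fδ - f)
    calc ‖(S (B y) - y) + S (adjoint A (fδ - f))‖
        ≤ ‖S (B y) - y‖ + ‖S (adjoint A (fδ - f))‖ := norm_add_le _ _
    _ ≤ ‖S (B y) - y‖ + δ / (2 * Real.sqrt ε) := by
        gcongr
        exact h2.trans (by gcongr)
  · rw [Ring.inverse_non_unit _ hu]
    simp only [zero_apply, zero_sub, norm_neg]
    have : 0 ≤ δ / (2 * Real.sqrt ε) := by positivity
    linarith
end

section
/- Let ε : ℝ → ℝ be continuously differentiable on [0,∞) with ε(t) > 0 for all t ≥ 0, ε monotonically decreasing with ε(t) → 0 as t → ∞, and |ε'(t)|/ε(t)^{5/2} → 0 as t → ∞. Then exp(−∫₀^t ε(s) ds) · ∫₀^t exp(∫₀^τ ε(s) ds) · |ε'(τ)|/(2 ε(τ)^{3/2}) dτ → 0 as t → ∞. -/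
open Filter Set

/-- Under conditions (1.4) on `ε`,
`exp(−∫₀^t ε) ∫₀^t exp(∫₀^τ ε) |ε'(τ)|/(2 ε(τ)^{3/2}) dτ → 0` as `t → ∞`. -/
theorem stmt17 (ε ε' : ℝ → ℝ)
    (hεC1 : ContDiffOn ℝ 1 ε (Ici 0))
    (hεd : ∀ t ∈ Ici (0 : ℝ), HasDerivWithinAt ε (ε' t) (Ici 0) t)
    (hεpos : ∀ t ∈ Ici (0 : ℝ), 0 < ε t)
    (hεdec : AntitoneOn ε (Ici 0))
    (hεlim : Tendsto ε atTop (nhds 0))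
    (hεrate : Tendsto (fun t => |ε' t| / (ε t ^ ((5 : ℝ) / 2))) atTop (nhds 0)) :
    Tendsto (fun t => Real.exp (-∫ s in (0 : ℝ)..t, ε s) *
        ∫ τ in (0 : ℝ)..t,
          Real.exp (∫ s in (0 : ℝ)..τ, ε s) * (|ε' τ| / (2 * ε τ ^ ((3 : ℝ) / 2))))
      atTop (nhds 0) := by
  have hUD : UniqueDiffOn ℝ (Ici (0:ℝ)) := uniqueDiffOn_Ici 0
  have hεcont : ContinuousOn ε (Ici 0) := hεC1.continuousOn
  have hε'cont : ContinuousOn ε' (Ici 0) := by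
    refine (hεC1.continuousOn_derivWithin hUD le_rfl).congr fun t ht => ?_
    exact ((hεd t ht).derivWithin (hUD t ht)).symm
  have hεint : ∀ a b : ℝ, 0 ≤ a → 0 ≤ b → IntervalIntegrable ε MeasureTheory.volume a b := by
    intro a b ha hb
    exact (hεcont.mono (fun x hx => le_trans (le_inf ha hb) hx.1)).intervalIntegrable
  have hEd : ∀ x : ℝ, 0 < x → HasDerivAt (fun t => ∫ s in (0:ℝ)..t, ε s) (ε x) x := by
    intro x hx
    have hmem : Ici (0:ℝ) ∈ nhds x := Ici_mem_nhds hx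
    exact intervalIntegral.integral_hasDerivAt_right (hεint 0 x le_rfl hx.le)
      ⟨Ici 0, hmem, hεcont.aestronglyMeasurable measurableSet_Ici⟩
      (hεcont.continuousAt hmem)
  have hEcont : ∀ b : ℝ, ContinuousOn (fun t => ∫ s in (0:ℝ)..t, ε s) (Icc 0 b) := by
    intro b
    rcases le_or_gt 0 b with hb | hb
    · have := intervalIntegral.continuousOn_primitive_interval'
        (hεint 0 b le_rfl hb) (left_mem_uIcc (a := (0:ℝ)) (b := b))
      rwa [uIcc_of_le hb] at this
    · rw [Icc_eq_empty (by linarith)]; exact continuousOn_empty _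
  set E : ℝ → ℝ := fun t => ∫ s in (0:ℝ)..t, ε s with hEdef
  have hEtop : Tendsto E atTop atTop := by
    -- rate eventually ≤ 1
    obtain ⟨T₁, hT₁⟩ : ∃ T₁ : ℝ, ∀ τ ≥ T₁, |ε' τ| / ε τ ^ ((5:ℝ)/2) < 1 :=
      (hεrate.eventually_lt_const one_pos).exists_forall_of_atTop
    set T₀ : ℝ := max T₁ 1 with hT₀def
    have hT₀1 : (1:ℝ) ≤ T₀ := le_max_right _ _
    have hT₀0 : (0:ℝ) < T₀ := lt_of_lt_of_le one_pos hT₀1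
    -- φ and its derivative
    set φ : ℝ → ℝ := fun τ => ε τ ^ (-(3:ℝ)/2) with hφdef
    have hεdA : ∀ x : ℝ, 0 < x → HasDerivAt ε (ε' x) x := fun x hx =>
      (hεd x (le_of_lt hx)).hasDerivAt (Ici_mem_nhds hx)
    have hφd : ∀ x : ℝ, 0 < x →
        HasDerivAt φ (ε' x * (-(3:ℝ)/2) * ε x ^ (-(5:ℝ)/2)) x := by
      intro x hx
      have h := (hεdA x hx).rpow_const (p := -(3:ℝ)/2) (Or.inl (hεpos x hx.le).ne')
      convert h using 2
      norm_num
    -- MVT bound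
    have hφbound : ∀ t ≥ T₀, φ t ≤ φ T₀ + (3/2) * (t - T₀) := by
      intro t ht
      have key := Convex.norm_image_sub_le_of_norm_hasDerivWithin_le
        (f := φ) (f' := fun x => ε' x * (-(3:ℝ)/2) * ε x ^ (-(5:ℝ)/2)) (s := Ici T₀)
        (C := 3/2)
        (fun x hx => (hφd x (lt_of_lt_of_le hT₀0 hx)).hasDerivWithinAt)
        (fun x hx => by
          have hx0 : (0:ℝ) < x := lt_of_lt_of_le hT₀0 hx
          have hεx := hεpos x hx0.le
          have hr : |ε' x| / ε x ^ ((5:ℝ)/2) ≤ 1 :=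
            (hT₁ x (le_trans (le_max_left _ _) hx)).le
          have hεp : (0:ℝ) < ε x ^ ((5:ℝ)/2) := Real.rpow_pos_of_pos hεx _
          rw [div_le_one hεp] at hr
          have hneg : ε x ^ (-(5:ℝ)/2) = (ε x ^ ((5:ℝ)/2))⁻¹ := by
            rw [← Real.rpow_neg hεx.le]; norm_num
          rw [Real.norm_eq_abs, abs_mul, abs_mul, hneg, abs_of_pos (inv_pos.mpr hεp)]
          rw [show |(-(3:ℝ)/2)| = 3/2 by norm_num]
          rw [mul_comm (|ε' x|) (3/2 : ℝ), mul_assoc]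
          have : |ε' x| * (ε x ^ ((5:ℝ)/2))⁻¹ ≤ 1 := by
            rw [← div_eq_mul_inv, div_le_one hεp]; exact hr
          nlinarith [abs_nonneg (ε' x)])
        (convex_Ici T₀) (self_mem_Ici) (mem_Ici.mpr ht)
      have := (le_abs_self (φ t - φ T₀)).trans (by
        simpa [Real.norm_eq_abs, abs_of_nonneg (sub_nonneg.mpr ht)] using key)
      linarith
    -- lower bound for ε
    have hφpos : ∀ x : ℝ, 0 ≤ x → 0 < φ x := fun x hx => Real.rpow_pos_of_pos (hεpos x hx) _
    have hApos : ∀ s ≥ T₀, 0 < φ T₀ + (3/2) * (s - T₀) := by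
      intro s hs
      have := hφpos T₀ hT₀0.le
      nlinarith
    have hεlower : ∀ s ≥ T₀, (φ T₀ + (3/2) * (s - T₀)) ^ (-(2:ℝ)/3) ≤ ε s := by
      intro s hs
      have hs0 : (0:ℝ) < s := lt_of_lt_of_le hT₀0 hs
      have h1 : φ s ≤ φ T₀ + (3/2) * (s - T₀) := hφbound s hs
      have h2 : (φ T₀ + (3/2)*(s - T₀)) ^ (-(2:ℝ)/3) ≤ (φ s) ^ (-(2:ℝ)/3) :=
        Real.rpow_le_rpow_of_nonpos (hφpos s hs0.le) h1 (by norm_num)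
      have h3 : (φ s) ^ (-(2:ℝ)/3) = ε s := by
        rw [hφdef]
        rw [← Real.rpow_mul (hεpos s hs0.le).le]
        norm_num
      linarith
    -- FTC for the explicit lower bound
    have hlowint : ∀ t ≥ T₀, ∫ s in T₀..t, (φ T₀ + (3/2) * (s - T₀)) ^ (-(2:ℝ)/3)
        = 2 * (φ T₀ + (3/2) * (t - T₀)) ^ ((1:ℝ)/3) - 2 * (φ T₀) ^ ((1:ℝ)/3) := by
      intro t ht
      have hG : ∀ s ∈ uIcc T₀ t, HasDerivAt (fun s => 2 * (φ T₀ + (3/2) * (s - T₀)) ^ ((1:ℝ)/3))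
          ((φ T₀ + (3/2) * (s - T₀)) ^ (-(2:ℝ)/3)) s := by
        intro s hs
        rw [uIcc_of_le ht] at hs
        have hsA : 0 < φ T₀ + (3/2) * (s - T₀) := hApos s hs.1
        have hu : HasDerivAt (fun s : ℝ => φ T₀ + (3/2) * (s - T₀)) (3/2) s := by
          simpa using (((hasDerivAt_id s).sub_const T₀).const_mul (3/2 : ℝ)).const_add (φ T₀)
        have := (hu.rpow_const (p := (1:ℝ)/3) (Or.inl hsA.ne')).const_mul (2:ℝ)
        refine this.congr_deriv ?_
        rw [show ((1:ℝ)/3 - 1) = -(2:ℝ)/3 by norm_num]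
        ring
      have hint : IntervalIntegrable (fun s => (φ T₀ + (3/2) * (s - T₀)) ^ (-(2:ℝ)/3))
          MeasureTheory.volume T₀ t := by
        apply ContinuousOn.intervalIntegrable
        apply ContinuousOn.rpow_const
        · fun_prop
        · intro x hx
          rw [uIcc_of_le ht] at hx
          exact Or.inl (hApos x hx.1).ne'
      have := intervalIntegral.integral_eq_sub_of_hasDerivAt hG hint
      simpa using this
    -- E t lower bound and divergence
    have hEsplit : ∀ t ≥ T₀, E t = E T₀ + ∫ s in T₀..t, ε s := by
      intro t ht
      exact (intervalIntegral.integral_add_adjacent_intervals (hεint 0 T₀ le_rfl hT₀0.le)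
        (hεint T₀ t hT₀0.le (le_trans hT₀0.le ht))).symm
    have hElb : ∀ t ≥ T₀, E T₀ + (2 * (φ T₀ + (3/2) * (t - T₀)) ^ ((1:ℝ)/3) - 2 * (φ T₀) ^ ((1:ℝ)/3)) ≤ E t := by
      intro t ht
      rw [hEsplit t ht, ← hlowint t ht]
      have hmono : ∫ s in T₀..t, (φ T₀ + (3/2) * (s - T₀)) ^ (-(2:ℝ)/3) ≤ ∫ s in T₀..t, ε s := by
        apply intervalIntegral.integral_mono_on ht
        · apply ContinuousOn.intervalIntegrable
          apply ContinuousOn.rpow_const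
          · fun_prop
          · intro x hx
            rw [uIcc_of_le ht] at hx
            exact Or.inl (hApos x hx.1).ne'
        · exact hεint T₀ t hT₀0.le (le_trans hT₀0.le ht)
        · intro x hx
          exact hεlower x hx.1
      linarith
    have hEtop : Tendsto E atTop atTop := by
      apply tendsto_atTop_mono' atTop (Eventually.mono (eventually_ge_atTop T₀)
        (fun t ht => hElb t ht))
      have h1 : Tendsto (fun t : ℝ => φ T₀ + (3/2) * (t - T₀)) atTop atTop := by
        apply tendsto_atTop_add_const_left
        exact (tendsto_atTop_add_const_right atTop (-T₀) tendsto_id).const_mul_atTop (by norm_num)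
      have h2 : Tendsto (fun t : ℝ => (φ T₀ + (3/2) * (t - T₀)) ^ ((1:ℝ)/3)) atTop atTop :=
        (tendsto_rpow_atTop (by norm_num)).comp h1
      have h3 := (h2.const_mul_atTop (by norm_num : (0:ℝ) < 2))
      have h4 := tendsto_atTop_add_const_right atTop (- (2 * (φ T₀) ^ ((1:ℝ)/3))) h3
      have h5 := tendsto_atTop_add_const_left atTop (E T₀) h4
      have heq : (fun t : ℝ => E T₀ + (2 * (φ T₀ + (3/2) * (t - T₀)) ^ ((1:ℝ)/3)
          - 2 * (φ T₀) ^ ((1:ℝ)/3)))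
          = fun t : ℝ => E T₀ + (2 * (φ T₀ + (3/2) * (t - T₀)) ^ ((1:ℝ)/3)
            + - (2 * (φ T₀) ^ ((1:ℝ)/3))) := by
        funext t; ring
      rw [heq]
      exact h5
    exact hEtop
  set G₀ : ℝ → ℝ := fun τ => Real.exp (E τ) * (|ε' τ| / (2 * ε τ ^ ((3:ℝ)/2))) with hG₀def
  -- continuity of G₀ on [0,b]
  have hG₀cont : ∀ b : ℝ, ContinuousOn G₀ (Icc 0 b) := by
    intro b
    have h1 : ContinuousOn (fun τ => Real.exp (E τ)) (Icc 0 b) := (hEcont b).rexp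
    have hsub : Icc (0:ℝ) b ⊆ Ici 0 := fun x hx => hx.1
    have h2 : ContinuousOn (fun τ => |ε' τ| / (2 * ε τ ^ ((3:ℝ)/2))) (Icc 0 b) := by
      apply ContinuousOn.div
      · exact (hε'cont.mono hsub).abs
      · exact continuousOn_const.mul (((hεcont.mono hsub)).rpow_const
          (fun x hx => Or.inl (hεpos x hx.1).ne'))
      · intro x hx
        have := Real.rpow_pos_of_pos (hεpos x hx.1) ((3:ℝ)/2)
        positivity
    exact h1.mul h2
  have hG₀int : ∀ a b : ℝ, 0 ≤ a → 0 ≤ b → IntervalIntegrable G₀ MeasureTheory.volume a b := by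
    intro a b ha hb
    apply ContinuousOn.intervalIntegrable
    exact (hG₀cont (max a b)).mono (fun x hx =>
      ⟨le_trans (le_inf ha hb) hx.1, hx.2⟩)
  have hG₀nonneg : ∀ τ : ℝ, 0 ≤ τ → 0 ≤ G₀ τ := by
    intro τ hτ
    have h1 := Real.rpow_pos_of_pos (hεpos τ hτ) ((3:ℝ)/2)
    have h2 := Real.exp_pos (E τ)
    have := abs_nonneg (ε' τ)
    positivity
  set F : ℝ → ℝ := fun t => ∫ τ in (0:ℝ)..t, G₀ τ with hFdef
  have hFnonneg : ∀ t : ℝ, 0 ≤ t → 0 ≤ F t := by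
    intro t ht
    apply intervalIntegral.integral_nonneg ht
    intro u hu
    exact hG₀nonneg u hu.1
  rw [Metric.tendsto_atTop]
  intro η hη
  -- choose T with rate < η on [T, ∞), T ≥ 1
  obtain ⟨T₁, hT₁⟩ : ∃ T₁ : ℝ, ∀ τ ≥ T₁, |ε' τ| / ε τ ^ ((5:ℝ)/2) < η :=
    (hεrate.eventually_lt_const hη).exists_forall_of_atTop
  set T : ℝ := max T₁ 1 with hTdef
  have hT1 : (1:ℝ) ≤ T := le_max_right _ _
  have hT0 : (0:ℝ) < T := lt_of_lt_of_le one_pos hT1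
  -- key estimate
  have hkey : ∀ t ≥ T, Real.exp (-E t) * F t ≤ Real.exp (-E t) * F T + η / 2 := by
    intro t ht
    have ht0 : (0:ℝ) < t := lt_of_lt_of_le hT0 ht
    have hsplit : F t = F T + ∫ τ in T..t, G₀ τ :=
      (intervalIntegral.integral_add_adjacent_intervals (hG₀int 0 T le_rfl hT0.le)
        (hG₀int T t hT0.le ht0.le)).symm
    -- exp(E) antiderivative identity
    have hftc : ∫ τ in T..t, ε τ * Real.exp (E τ) = Real.exp (E t) - Real.exp (E T) := by
      apply intervalIntegral.integral_eq_sub_of_hasDerivAt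
      · intro x hx
        rw [uIcc_of_le ht] at hx
        have hx0 : (0:ℝ) < x := lt_of_lt_of_le hT0 hx.1
        have := (hEd x hx0).exp
        exact this.congr_deriv (mul_comm _ _)
      · apply ContinuousOn.intervalIntegrable
        rw [uIcc_of_le ht]
        have hsub : Icc T t ⊆ Icc 0 t := Icc_subset_Icc hT0.le le_rfl
        exact ((hεcont.mono (fun x hx => hx.1)).mono hsub).mul
          (((hEcont t).mono hsub).rexp)
    -- pointwise comparison on [T, t]
    have hmono : ∫ τ in T..t, G₀ τ ≤ ∫ τ in T..t, (η/2) * (ε τ * Real.exp (E τ)) := by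
      apply intervalIntegral.integral_mono_on ht (hG₀int T t hT0.le ht0.le)
      · apply ContinuousOn.intervalIntegrable
        rw [uIcc_of_le ht]
        have hsub : Icc T t ⊆ Icc 0 t := Icc_subset_Icc hT0.le le_rfl
        exact continuousOn_const.mul (((hεcont.mono (fun x hx => hx.1)).mono hsub).mul
          (((hEcont t).mono hsub).rexp))
      · intro x hx
        have hx0 : (0:ℝ) ≤ x := le_trans hT0.le hx.1
        have hεx := hεpos x hx0
        have hr : |ε' x| / ε x ^ ((5:ℝ)/2) ≤ η := (hT₁ x (le_trans (le_max_left _ _) hx.1)).le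
        have hp52 : (0:ℝ) < ε x ^ ((5:ℝ)/2) := Real.rpow_pos_of_pos hεx _
        have hp32 : (0:ℝ) < ε x ^ ((3:ℝ)/2) := Real.rpow_pos_of_pos hεx _
        rw [div_le_iff₀ hp52] at hr
        have hsplitp : ε x ^ ((5:ℝ)/2) = ε x ^ ((3:ℝ)/2) * ε x := by
          rw [show ((5:ℝ)/2) = (3:ℝ)/2 + 1 by norm_num, Real.rpow_add hεx, Real.rpow_one]
        have hineq : |ε' x| / (2 * ε x ^ ((3:ℝ)/2)) ≤ η / 2 * ε x := by
          rw [div_le_iff₀ (by positivity)]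
          calc |ε' x| ≤ η * ε x ^ ((5:ℝ)/2) := hr
            _ = η / 2 * ε x * (2 * ε x ^ ((3:ℝ)/2)) := by rw [hsplitp]; ring
        have hexp := Real.exp_pos (E x)
        calc G₀ x = Real.exp (E x) * (|ε' x| / (2 * ε x ^ ((3:ℝ)/2))) := rfl
          _ ≤ Real.exp (E x) * (η / 2 * ε x) := by
              exact mul_le_mul_of_nonneg_left hineq hexp.le
          _ = η/2 * (ε x * Real.exp (E x)) := by ring
    have hcalc : ∫ τ in T..t, (η/2) * (ε τ * Real.exp (E τ))
        = η/2 * (Real.exp (E t) - Real.exp (E T)) := by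
      rw [intervalIntegral.integral_const_mul, hftc]
    have hEexp : Real.exp (-E t) * Real.exp (E t) = 1 := by
      rw [← Real.exp_add]; simp
    have hexpnn : (0:ℝ) ≤ Real.exp (-E t) := (Real.exp_pos _).le
    have hETpos : (0:ℝ) < Real.exp (E T) := Real.exp_pos _
    have h1 : Real.exp (-E t) * F t
        = Real.exp (-E t) * F T + Real.exp (-E t) * ∫ τ in T..t, G₀ τ := by
      rw [hsplit]; ring
    rw [h1]
    have h2 : Real.exp (-E t) * ∫ τ in T..t, G₀ τ ≤ η / 2 := by
      calc Real.exp (-E t) * ∫ τ in T..t, G₀ τ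
          ≤ Real.exp (-E t) * (η/2 * (Real.exp (E t) - Real.exp (E T))) := by
            apply mul_le_mul_of_nonneg_left _ hexpnn
            rw [← hcalc]; exact hmono
        _ ≤ Real.exp (-E t) * (η/2 * Real.exp (E t)) := by
            apply mul_le_mul_of_nonneg_left _ hexpnn
            nlinarith
        _ = η/2 * (Real.exp (-E t) * Real.exp (E t)) := by ring
        _ = η/2 := by rw [hEexp]; ring
    linarith
  -- the tail term vanishes
  have hvanish : Tendsto (fun t => Real.exp (-E t) * F T) atTop (nhds 0) := by
    have h1 : Tendsto (fun t => -E t) atTop atBot := tendsto_neg_atBot_iff.mpr hEtop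
    have h2 : Tendsto (fun t => Real.exp (-E t)) atTop (nhds 0) :=
      Real.tendsto_exp_atBot.comp h1
    simpa using h2.mul_const (F T)
  obtain ⟨N, hN⟩ : ∃ N : ℝ, ∀ t ≥ N, Real.exp (-E t) * F T < η / 2 :=
    (hvanish.eventually_lt_const (by linarith : (0:ℝ) < η/2)).exists_forall_of_atTop
  refine ⟨max N T, fun t ht => ?_⟩
  have htT : T ≤ t := le_trans (le_max_right N T) ht
  have htN : N ≤ t := le_trans (le_max_left N T) ht
  have ht0 : (0:ℝ) ≤ t := le_trans hT0.le htT
  have hnn : 0 ≤ Real.exp (-E t) * F t := mul_nonneg (Real.exp_pos _).le (hFnonneg t ht0)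
  rw [Real.dist_eq, sub_zero, abs_of_nonneg hnn]
  calc Real.exp (-E t) * F t ≤ Real.exp (-E t) * F T + η / 2 := hkey t htT
    _ < η/2 + η/2 := by linarith [hN t htN]
    _ = η := by ring
end

section
/- Let ε : ℝ → ℝ be continuous on [0,∞), positive, and nonincreasing on [0,∞), let c > 0, and let g : ℝ → ℝ be differentiable on [0,∞) with g(0) = 0 and g'(t) ≤ −ε(t)·g(t) + c for all t ≥ 0. Then g(t) ≤ c/ε(t) for all t ≥ 0. -/
open Filter Set

/-- Appendix estimate: if `ε` is continuous, positive and nonincreasing on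
`[0,∞)`, `c > 0`, `g` is differentiable on `[0,∞)` with `g(0) = 0` and
`g'(t) ≤ −ε(t) g(t) + c` for `t ≥ 0`, then `g(t) ≤ c/ε(t)` for all `t ≥ 0`. -/
theorem stmt18 (ε : ℝ → ℝ)
    (hεcont : ContinuousOn ε (Ici 0))
    (hεpos : ∀ t ∈ Ici (0 : ℝ), 0 < ε t)
    (hεdec : AntitoneOn ε (Ici 0))
    (c : ℝ) (hc : 0 < c)
    (g g' : ℝ → ℝ)
    (hg : ∀ t ∈ Ici (0 : ℝ), HasDerivWithinAt g (g' t) (Ici 0) t)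
    (hg0 : g 0 = 0)
    (hg' : ∀ t ∈ Ici (0 : ℝ), g' t ≤ -ε t * g t + c) :
    ∀ t ∈ Ici (0 : ℝ), g t ≤ c / ε t := by
  -- extend ε continuously to all of ℝ
  set εm : ℝ → ℝ := fun t => ε (max t 0) with hεm_def
  have hεm_eq : ∀ t ∈ Ici (0:ℝ), εm t = ε t := by
    intro t ht; simp [εm, max_eq_left (by exact ht : (0:ℝ) ≤ t)]
  have hεmc : Continuous εm :=
    hεcont.comp_continuous (continuous_id.max continuous_const) (fun x => le_max_right x 0)
  set F : ℝ → ℝ := fun t => ∫ s in (0:ℝ)..t, εm s with hF_def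
  have hFd : ∀ t : ℝ, HasDerivAt F (εm t) t := fun t =>
    intervalIntegral.integral_hasDerivAt_right (hεmc.intervalIntegrable _ _)
      (hεmc.stronglyMeasurable.stronglyMeasurableAtFilter) hεmc.continuousAt
  set E : ℝ → ℝ := fun t => Real.exp (F t) with hE_def
  have hEd : ∀ t : ℝ, HasDerivAt E (E t * εm t) t := fun t => (hFd t).exp
  have hEc : Continuous E :=
    Real.continuous_exp.comp (continuous_iff_continuousAt.2 fun t => (hFd t).continuousAt)
  have hEpos : ∀ t, 0 < E t := fun t => Real.exp_pos _
  set I : ℝ → ℝ := fun t => ∫ s in (0:ℝ)..t, E s with hI_def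
  have hId : ∀ t : ℝ, HasDerivAt I (E t) t := fun t =>
    intervalIntegral.integral_hasDerivAt_right (hEc.intervalIntegrable _ _)
      (hEc.stronglyMeasurable.stronglyMeasurableAtFilter) hEc.continuousAt
  set h : ℝ → ℝ := fun t => g t * E t - c * I t with hh_def
  have hhd : ∀ t ∈ Ici (0:ℝ),
      HasDerivWithinAt h (g' t * E t + g t * (E t * εm t) - c * E t) (Ici 0) t := by
    intro t ht
    exact ((hg t ht).mul (hEd t).hasDerivWithinAt).sub
      ((hId t).hasDerivWithinAt.const_mul c)
  have hder : ∀ x ∈ interior (Ici (0:ℝ)),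
      HasDerivAt h (g' x * E x + g x * (E x * εm x) - c * E x) x := by
    intro x hx
    rw [interior_Ici] at hx
    exact (hhd x (Set.mem_Ici.mpr (le_of_lt hx))).hasDerivAt (Ici_mem_nhds hx)
  have hanti : AntitoneOn h (Ici 0) := by
    apply antitoneOn_of_deriv_nonpos (convex_Ici 0)
      (fun t ht => (hhd t ht).continuousWithinAt)
    · exact fun x hx => (hder x hx).differentiableAt.differentiableWithinAt
    · intro x hx
      rw [(hder x hx).deriv]
      have hx0 : (0:ℝ) ≤ x := le_of_lt (by rwa [interior_Ici] at hx)
      have h1 := hg' x hx0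
      have h3 := hEpos x
      rw [hεm_eq x hx0]
      nlinarith [mul_le_mul_of_nonneg_right h1 h3.le]
  intro t ht
  have hεt := hεpos t ht
  have hht : h t ≤ 0 := by
    have := hanti (self_mem_Ici) ht ht
    have h0 : h 0 = 0 := by simp [h, I, hg0]
    linarith [h0 ▸ this]
  -- key integral bound: ε t * I t ≤ E t - 1
  have hkey : ε t * I t ≤ E t - 1 := by
    have hmono : (∫ s in (0:ℝ)..t, ε t * E s) ≤ ∫ s in (0:ℝ)..t, E s * εm s := by
      apply intervalIntegral.integral_mono_on ht
      · exact ((continuous_const.mul hEc).intervalIntegrable _ _)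
      · exact ((hEc.mul hεmc).intervalIntegrable _ _)
      · intro s hs
        have hs0 : (0:ℝ) ≤ s := hs.1
        have : ε t ≤ εm s := by
          rw [hεm_eq s hs0]
          exact hεdec hs0 ht hs.2
        have := mul_le_mul_of_nonneg_left this (hEpos s).le
        linarith [this]
    have heq : (∫ s in (0:ℝ)..t, E s * εm s) = E t - E 0 :=
      intervalIntegral.integral_eq_sub_of_hasDerivAt
        (fun s _ => hEd s) ((hEc.mul hεmc).intervalIntegrable _ _)
    have hE0 : E 0 = 1 := by simp [E, F]
    rw [intervalIntegral.integral_const_mul] at hmono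
    rw [heq, hE0] at hmono
    exact hmono
  -- conclude
  have hEt := hEpos t
  have hgE : g t * E t ≤ c * I t := by
    have : g t * E t - c * I t ≤ 0 := hht
    linarith
  rw [le_div_iff₀ hεt]
  have hstep : g t * E t * ε t ≤ c * (E t - 1) := by
    calc g t * E t * ε t ≤ c * I t * ε t :=
          mul_le_mul_of_nonneg_right hgE hεt.le
      _ = c * (ε t * I t) := by ring
      _ ≤ c * (E t - 1) := mul_le_mul_of_nonneg_left hkey hc.le
  nlinarith
end

section
/- Let H be a complex Hilbert space, A : H →L[ℂ] H a bounded linear operator, B := A†A, h ∈ H, y := B h, f := A y, and let δ > 0 and f_δ ∈ H with ‖f_δ − f‖ ≤ δ. Set ε := δ^{2/3}. Then ‖(B + ε•I)^{-1}(A† f_δ) − y‖ ≤ δ/(2√ε) + ε·‖h‖ = (1/2 + ‖h‖)·δ^{2/3}; in particular, for source elements y = B h the regularized solution converges at the rate O(δ^{2/3}). -/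
set_option maxHeartbeats 1000000


open ContinuousLinearMap

/-- for source elements `y = B h` (with `B = A†A`), noisy data `f_δ` with
`‖f_δ − A y‖ ≤ δ`, and the a priori choice `ε = δ^{2/3}`, the Tikhonov approximation
satisfies `‖(B + εI)⁻¹ A† f_δ − y‖ ≤ δ/(2√ε) + ε‖h‖ = (1/2 + ‖h‖) δ^{2/3}`. -/
theorem stmt19 {H : Type*} [NormedAddCommGroup H] [InnerProductSpace ℂ H] [CompleteSpace H]
    (A : H →L[ℂ] H) (B : H →L[ℂ] H) (hB : B = adjoint A * A)
    (h : H) (y : H) (hy : y = B h) (f : H) (hf : f = A y)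
    (δ : ℝ) (hδ : 0 < δ) (fδ : H) (hfδ : ‖fδ - f‖ ≤ δ)
    (ε : ℝ) (hε : ε = δ ^ ((2 : ℝ) / 3)) :
    ‖Ring.inverse (B + ε • (1 : H →L[ℂ] H)) (adjoint A fδ) - y‖ ≤
        δ / (2 * Real.sqrt ε) + ε * ‖h‖ ∧
      δ / (2 * Real.sqrt ε) + ε * ‖h‖ = (1 / 2 + ‖h‖) * δ ^ ((2 : ℝ) / 3) := by
  have hεpos : 0 < ε := hε ▸ Real.rpow_pos_of_pos hδ _
  set T := B + ε • (1 : H →L[ℂ] H) with hT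
  -- T is invertible
  have hsq : star (Real.sqrt ε • (1 : H →L[ℂ] H)) * (Real.sqrt ε • 1) = ε • 1 := by
    rw [star_smul, star_one, smul_mul_smul_comm, one_mul]
    rw [show star (Real.sqrt ε) * Real.sqrt ε = ε from by
      simp [Real.mul_self_sqrt hεpos.le]]
  have hnn : (0 : H →L[ℂ] H) ≤ ε • 1 := hsq ▸ star_mul_self_nonneg _
  have h1u : IsUnit (ε • (1 : H →L[ℂ] H)) := by
    refine ⟨⟨ε • 1, ε⁻¹ • 1, ?_, ?_⟩, rfl⟩ <;>
      rw [smul_mul_smul_comm, one_mul] <;>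
        simp [mul_inv_cancel₀ hεpos.ne', inv_mul_cancel₀ hεpos.ne']
  have hUnit : IsUnit T := by
    rw [hT, hB]
    exact CStarAlgebra.isUnit_of_le _ (le_add_of_nonneg_left (star_mul_self_nonneg A)) ⟨hnn, h1u⟩
  set R := Ring.inverse T with hR
  have hTR : ∀ v : H, T (R v) = v := by
    intro v
    have hc : T * R = 1 := Ring.mul_inverse_cancel T hUnit
    calc T (R v) = (T * R) v := rfl
      _ = v := by rw [hc]; rfl
  have hRT : ∀ v : H, R (T v) = v := by
    intro v
    have hc : R * T = 1 := Ring.inverse_mul_cancel T hUnit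
    calc R (T v) = (R * T) v := rfl
      _ = v := by rw [hc]; rfl
  have happ : ∀ v : H, T v = B v + ε • v := by
    intro v; simp [hT]
  clear_value R
  clear_value T
  clear hR hT hUnit h1u hnn hsq
  -- inner product helpers
  have eB : ∀ u : H, (inner ℂ (B u) u) = ((‖A u‖ ^ 2 : ℝ) : ℂ) := by
    intro u
    rw [hB, mul_apply_eq_comp, adjoint_inner_left, inner_self_eq_norm_sq_to_K]
    norm_cast
  have eS : ∀ u v : H, (inner ℂ (ε • u) v) = (ε : ℂ) * inner ℂ u v := by
    intro u v
    rw [RCLike.real_smul_eq_coe_smul (K := ℂ), inner_smul_left]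
    simp [Complex.conj_ofReal]
  -- Key bound 1 : ‖R (A† g)‖ ≤ ‖g‖ / (2 √ε)
  have key1 : ∀ g : H, ‖R (adjoint A g)‖ ≤ ‖g‖ / (2 * Real.sqrt ε) := by
    intro g
    set x := R (adjoint A g) with hx
    have hTx : B x + ε • x = adjoint A g := by
      have := hTR (adjoint A g)
      rwa [happ x] at this
    have eself : (inner ℂ x x) = ((‖x‖ ^ 2 : ℝ) : ℂ) := by
      rw [inner_self_eq_norm_sq_to_K]; norm_cast
    have h6 := congrArg (fun v : H => (inner ℂ v x).re) hTx
    rw [inner_add_left, eB x, eS x x, adjoint_inner_left, eself] at h6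
    have hcast : (((‖A x‖ ^ 2 : ℝ) : ℂ) + (ε : ℂ) * ((‖x‖ ^ 2 : ℝ) : ℂ))
        = (((‖A x‖ ^ 2 + ε * ‖x‖ ^ 2 : ℝ)) : ℂ) := by push_cast; ring
    rw [hcast, Complex.ofReal_re] at h6
    have h8 : ‖A x‖ ^ 2 + ε * ‖x‖ ^ 2 ≤ ‖g‖ * ‖A x‖ := by
      rw [h6]
      have := re_inner_le_norm (𝕜 := ℂ) g (A x)
      rwa [RCLike.re_to_complex] at this
    have h9 : ε * ‖x‖ ^ 2 ≤ ‖g‖ ^ 2 / 4 := by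
      nlinarith [sq_nonneg (‖A x‖ - ‖g‖ / 2)]
    have h10 : ‖x‖ ^ 2 ≤ ‖g‖ ^ 2 / (4 * ε) := by
      rw [le_div_iff₀ (by positivity)]
      nlinarith
    have h4 : Real.sqrt 4 = 2 := by
      rw [show (4:ℝ) = 2 ^ 2 by norm_num, Real.sqrt_sq (by norm_num)]
    calc ‖x‖ = Real.sqrt (‖x‖ ^ 2) := (Real.sqrt_sq (norm_nonneg x)).symm
      _ ≤ Real.sqrt (‖g‖ ^ 2 / (4 * ε)) := Real.sqrt_le_sqrt h10
      _ = ‖g‖ / (2 * Real.sqrt ε) := by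
          rw [Real.sqrt_div (sq_nonneg _), Real.sqrt_sq (norm_nonneg g),
            Real.sqrt_mul (by norm_num : (0:ℝ) ≤ 4), h4]
  -- Key bound 2 : ‖R (B h)‖ ≤ ‖h‖
  have key2 : ‖R (B h)‖ ≤ ‖h‖ := by
    set w := R (B h) with hw
    have hTw : B w + ε • w = B h := by
      have := hTR (B h); rwa [happ w] at this
    have hc : B (w - h) = -(ε • w) := by
      rw [map_sub B w h, ← hTw]; abel
    have e1 : ((‖A (w - h)‖ ^ 2 : ℝ) : ℂ) = (inner ℂ (-(ε • w)) (w - h)) := by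
      rw [← hc, eB]
    have e2 : (inner ℂ (-(ε • w)) (w - h)) = -((ε : ℂ) * ((inner ℂ w w) - inner ℂ w h)) := by
      rw [inner_neg_left, eS, inner_sub_right]
    have h3 : (0:ℝ) ≤ (-((ε : ℂ) * ((inner ℂ w w) - inner ℂ w h))).re := by
      rw [← e2, ← e1, Complex.ofReal_re]
      positivity
    have him : (inner ℂ w w).im = 0 := by
      have := inner_self_im (𝕜 := ℂ) w
      rwa [RCLike.im_to_complex] at this
    have hre : (inner ℂ w w).re = ‖w‖ ^ 2 := by
      have := inner_self_eq_norm_sq (𝕜 := ℂ) w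
      rwa [RCLike.re_to_complex] at this
    have h5 : (inner ℂ w h).re ≤ ‖w‖ * ‖h‖ := by
      have := re_inner_le_norm (𝕜 := ℂ) w h
      rwa [RCLike.re_to_complex] at this
    simp only [Complex.neg_re, Complex.mul_re, Complex.sub_re, Complex.sub_im,
      Complex.ofReal_re, Complex.ofReal_im, him, hre, zero_mul, sub_zero] at h3
    have h4 : ‖w‖ ^ 2 - (inner ℂ w h).re ≤ 0 := by
      by_contra hlt
      push_neg at hlt
      nlinarith [mul_pos hεpos hlt]
    nlinarith [norm_nonneg w, norm_nonneg h, h4, h5]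
  -- decomposition
  have hAf : adjoint A f = B y := by rw [hf, hB, mul_apply_eq_comp]
  have hBy : B y = T y - ε • y := by rw [happ y]; abel
  have hRsm : ∀ v : H, R (ε • v) = ε • R v := by
    intro v
    rw [RCLike.real_smul_eq_coe_smul (K := ℂ), RCLike.real_smul_eq_coe_smul (K := ℂ), map_smul]
  have hpart : R (B y) - y = -(ε • R (B h)) := by
    rw [hBy, map_sub R, hRT y, hRsm y, hy]
    abel
  have hdec : R (adjoint A fδ) - y = R (adjoint A (fδ - f)) + -(ε • R (B h)) := by
    have h1 : adjoint A fδ = adjoint A (fδ - f) + B y := by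
      rw [map_sub, hAf]; abel
    calc R (adjoint A fδ) - y = R (adjoint A (fδ - f)) + (R (B y) - y) := by
          rw [h1, map_add]; abel
      _ = R (adjoint A (fδ - f)) + -(ε • R (B h)) := by rw [hpart]
  have hbound : ‖R (adjoint A fδ) - y‖ ≤ δ / (2 * Real.sqrt ε) + ε * ‖h‖ := by
    rw [hdec]
    calc ‖R (adjoint A (fδ - f)) + -(ε • R (B h))‖
        ≤ ‖R (adjoint A (fδ - f))‖ + ‖-(ε • R (B h))‖ := norm_add_le _ _
      _ = ‖R (adjoint A (fδ - f))‖ + ε * ‖R (B h)‖ := by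
          rw [norm_neg, norm_smul, Real.norm_of_nonneg hεpos.le]
      _ ≤ ‖fδ - f‖ / (2 * Real.sqrt ε) + ε * ‖R (B h)‖ := by
          gcongr
          exact key1 _
      _ ≤ δ / (2 * Real.sqrt ε) + ε * ‖h‖ := by
          gcongr
  refine ⟨hbound, ?_⟩
  have h13 : Real.sqrt ε = δ ^ ((1:ℝ)/3) := by
    rw [hε, Real.sqrt_eq_rpow, ← Real.rpow_mul hδ.le]
    norm_num
  have h23 : δ ^ ((2:ℝ)/3) * δ ^ ((1:ℝ)/3) = δ := by
    rw [← Real.rpow_add hδ]; norm_num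
  have hpos13 : (0:ℝ) < δ ^ ((1:ℝ)/3) := Real.rpow_pos_of_pos hδ _
  have hd : δ / (2 * δ ^ ((1:ℝ)/3)) = δ ^ ((2:ℝ)/3) / 2 := by
    rw [div_eq_div_iff (by positivity) (by norm_num)]
    linear_combination (-2) * h23
  rw [h13, hd, hε]
  ring
end
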